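/- The class of languages recognised by a pseudo-variety V of finite Ext-algebras forms a pseudo-variety of VPL: for each alphabet it is a Boolean algebra closed under inverse ext-operations, and the whole class is closed under inverse Ext-algebra morphisms. -/

import Mathlib

inductive VPKind : Type
  | call | ret | intern
deriving DecidableEq

class VPAlphabet (A : Type) where
  kind : A → VPKind

variable {A : Type} [VPAlphabet A]

inductive WellMatched : List A → Prop
  | nil : WellMatched []
  | intern (c : A) (hc : VPAlphabet.kind c = VPKind.intern) : WellMatched [c]
  | ext (a b : A) (w : List A) (ha : VPAlphabet.kind a = VPKind.call)
      (hb : VPAlphabet.kind b = VPKind.ret) (hw : WellMatched w) :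
      WellMatched (a :: w ++ [b])
  | append (u v : List A) (hu : WellMatched u) (hv : WellMatched v) : WellMatched (u ++ v)

theorem wm_insert {u v x : List A} (h : WellMatched (u ++ v)) (hx : WellMatched x) :
    WellMatched (u ++ x ++ v) := by
  suffices H : ∀ w, WellMatched w → ∀ u' v' : List A, w = u' ++ v' →
      WellMatched (u' ++ x ++ v') from H _ h u v rfl
  intro w hw
  induction hw with
  | nil =>
    intro u' v' huv
    obtain ⟨rfl, rfl⟩ := List.append_eq_nil_iff.mp huv.symm
    simpa using hx
  | intern c hc =>
    intro u' v' huv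
    rcases u' with _ | ⟨a, u''⟩
    · simp only [List.nil_append] at huv
      subst huv
      simpa using WellMatched.append x [c] hx (WellMatched.intern c hc)
    · have h1 : c = a := by injection huv
      have h2 : ([] : List A) = u'' ++ v' := by injection huv
      obtain ⟨rfl, rfl⟩ := List.append_eq_nil_iff.mp h2.symm
      subst h1
      simpa using WellMatched.append [c] x (WellMatched.intern c hc) hx
  | ext a b w' ha hb hw' ih =>
    intro u' v' huv
    rcases u' with _ | ⟨a'', u''⟩
    · simp only [List.nil_append] at huv
      subst huv
      simpa using WellMatched.append x _ hx (WellMatched.ext a b w' ha hb hw')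
    · have h1 : a = a'' := by injection huv
      have huv2 : w' ++ [b] = u'' ++ v' := by injection huv
      subst h1
      rcases List.eq_nil_or_concat v' with rfl | ⟨v'', b'', rfl⟩
      · have h3 : u'' = w' ++ [b] := by simpa using huv2.symm
        subst h3
        simpa using WellMatched.append _ x (WellMatched.ext a b w' ha hb hw') hx
      · have h4 : w' = u'' ++ v'' ∧ [b] = [b''] :=
          List.append_inj' (by simpa [List.append_assoc] using huv2) rfl
        obtain ⟨rfl, hb'⟩ := h4
        have hbb : b = b'' := by injection hb'
        subst hbb
        have := WellMatched.ext a b _ ha hb (ih u'' v'' rfl)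
        simpa [List.append_assoc] using this
  | append w₁ w₂ h₁ h₂ ih₁ ih₂ =>
    intro u' v' huv
    rcases List.append_eq_append_iff.mp huv with ⟨a', rfl, rfl⟩ | ⟨c', rfl, rfl⟩
    · have := WellMatched.append _ _ h₁ (ih₂ a' v' rfl)
      simpa [List.append_assoc] using this
    · have := WellMatched.append _ _ (ih₁ u' c' rfl) h₂
      simpa [List.append_assoc] using this

def WM (A : Type) [VPAlphabet A] : Type := {w : List A // WellMatched w}

instance : Monoid (WM A) where
  one := ⟨[], WellMatched.nil⟩
  mul u v := ⟨u.1 ++ v.1, WellMatched.append _ _ u.2 v.2⟩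
  mul_assoc a b c := Subtype.ext (List.append_assoc _ _ _)
  one_mul a := Subtype.ext (List.nil_append _)
  mul_one a := Subtype.ext (List.append_nil _)

@[simp] theorem WM.mul_val (x y : WM A) : (x * y).1 = x.1 ++ y.1 := rfl
@[simp] theorem WM.one_val : (1 : WM A).1 = [] := rfl

instance : Nonempty (WM A) := ⟨1⟩

def extWord (u v : List A) (h : WellMatched (u ++ v)) (x : WM A) : WM A :=
  ⟨u ++ x.1 ++ v, wm_insert h x.2⟩

@[simp] theorem extWord_val (u v : List A) (h : WellMatched (u ++ v)) (x : WM A) :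
    (extWord u v h x).1 = u ++ x.1 ++ v := rfl

structure ExtAlgebra (R : Type*) [Monoid R] where
  O : Submonoid (Function.End R)
  mulLeft_mem : ∀ r : R, (fun x => r * x) ∈ O
  mulRight_mem : ∀ r : R, (fun x => x * r) ∈ O

structure ExtAlgHom {R S : Type*} [Monoid R] [Monoid S]
    (ER : ExtAlgebra R) (ES : ExtAlgebra S) where
  toMonoidHom : R →* S
  opMap : ER.O →* ES.O
  compat : ∀ (e : ER.O) (r : R),
    (opMap e : Function.End S) (toMonoidHom r) = toMonoidHom ((e : Function.End R) r)

/-- A morphism of `Ext`-algebras from the free `Ext`-algebra of well-matched words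
into an `Ext`-algebra `R`, given by its monoid part and by the images of the
operations `ext_{u,v}`. -/
structure ExtHomWM (A : Type) [VPAlphabet A] {R : Type*} [Monoid R] (ER : ExtAlgebra R) where
  toMonoidHom : WM A →* R
  op : ∀ u v : List A, WellMatched (u ++ v) → ER.O
  op_one : op [] [] WellMatched.nil = 1
  op_comp : ∀ u v (h : WellMatched (u ++ v)) u' v' (h' : WellMatched (u' ++ v'))
      (h'' : WellMatched ((u ++ u') ++ (v' ++ v))),
      op (u ++ u') (v' ++ v) h'' = op u v h * op u' v' h'
  op_spec : ∀ u v (h : WellMatched (u ++ v)) (x : WM A),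
      (op u v h : Function.End R) (toMonoidHom x) = toMonoidHom (extWord u v h x)

/-- `R` recognises `L` via the morphism `φ` when `L` is the preimage of its image. -/
def Recognises {R : Type*} [Monoid R] {ER : ExtAlgebra R}
    (φ : ExtHomWM A ER) (L : Set (WM A)) : Prop :=
  L = φ.toMonoidHom ⁻¹' (φ.toMonoidHom '' L)

/-- The free `Ext`-algebra structure on the monoid of well-matched words. -/
def freeExt (A : Type) [VPAlphabet A] : ExtAlgebra (WM A) where
  O :=
    { carrier := {e | ∃ u v, ∃ h : WellMatched (u ++ v), ∀ x : WM A, e x = extWord u v h x}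
      one_mem' := ⟨[], [], WellMatched.nil, fun x => Subtype.ext (by show x.1 = [] ++ x.1 ++ []; simp)⟩
      mul_mem' := by
        rintro e f ⟨u, v, h, he⟩ ⟨u', v', h', hf⟩
        have h'' : WellMatched ((u ++ u') ++ (v' ++ v)) := by
          simpa [List.append_assoc] using wm_insert h h'
        exact ⟨u ++ u', v' ++ v, h'', fun x => by
          rw [show (e * f) x = e (f x) from rfl, hf, he]
          exact Subtype.ext (by simp [List.append_assoc])⟩ }
  mulLeft_mem r := ⟨r.1, [], by simpa using r.2, fun x => Subtype.ext (by simp)⟩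
  mulRight_mem r := ⟨[], r.1, by simpa using r.2, fun x => Subtype.ext (by simp)⟩

/-- A sub-`Ext`-algebra of an `Ext`-algebra. -/
structure SubExt {S : Type*} [Monoid S] (ES : ExtAlgebra S) where
  carrier : Submonoid S
  ops : Submonoid (Function.End S)
  ops_le : ops ≤ ES.O
  maps_to : ∀ e ∈ ops, ∀ x ∈ carrier, e x ∈ carrier
  mulLeft_mem : ∀ r ∈ carrier, (fun x => r * x) ∈ ops
  mulRight_mem : ∀ r ∈ carrier, (fun x => x * r) ∈ ops

/-- The `Ext`-algebra structure induced on a sub-`Ext`-algebra. -/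
def SubExt.toExtAlgebra {S : Type*} [Monoid S] {ES : ExtAlgebra S} (T : SubExt ES) :
    ExtAlgebra T.carrier where
  O :=
    { carrier := {e : Function.End T.carrier | ∃ f ∈ T.ops, ∀ x : T.carrier, (e x : S) = f x}
      one_mem' := ⟨1, T.ops.one_mem, fun _ => rfl⟩
      mul_mem' := by
        rintro e e' ⟨f, hf, he⟩ ⟨f', hf', he'⟩
        exact ⟨f * f', mul_mem hf hf', fun x => by
          rw [show (e * e') x = e (e' x) from rfl, show (f * f') (x : S) = f (f' x) from rfl,
            ← he', he]⟩ }
  mulLeft_mem r := ⟨fun x => (r : S) * x, T.mulLeft_mem r r.2, fun _ => rfl⟩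
  mulRight_mem r := ⟨fun x => x * (r : S), T.mulRight_mem r r.2, fun _ => rfl⟩

/-- `ER` is a quotient of `ES` if there is a surjective morphism of `Ext`-algebras
from `ES` onto `ER`. -/
def IsQuotientOf {R S : Type*} [Monoid R] [Monoid S]
    (ER : ExtAlgebra R) (ES : ExtAlgebra S) : Prop :=
  ∃ h : ExtAlgHom ES ER, Function.Surjective h.toMonoidHom ∧ Function.Surjective h.opMap

/-- Bundled finite `Ext`-algebras. -/
structure BExt : Type 1 where
  carrier : Type
  [mon : Monoid carrier]
  [fin : Finite carrier]
  ext : ExtAlgebra carrier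

attribute [instance] BExt.mon BExt.fin

/-! ### Visibly pushdown automata -/

structure VPA (A : Type) [VPAlphabet A] where
  Q : Type
  [finQ : Finite Q]
  q0 : Q
  Γ : Type
  [finΓ : Finite Γ]
  bot : Γ
  δ : A → Q → Γ → Q × List Γ
  F : Set Q
  call_spec : ∀ a q G, VPAlphabet.kind a = VPKind.call → ∃ G', (δ a q G).2 = [G', G]
  ret_spec : ∀ a q G, VPAlphabet.kind a = VPKind.ret → (δ a q G).2 = []
  int_spec : ∀ a q G, VPAlphabet.kind a = VPKind.intern → (δ a q G).2 = [G]

attribute [instance] VPA.finQ VPA.finΓ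

def VPA.runAux (M : VPA A) : List A → M.Q → List M.Γ → M.Q × List M.Γ
  | [], q, s => (q, s)
  | _ :: w, q, [] => M.runAux w q []
  | a :: w, q, G :: s => M.runAux w (M.δ a q G).1 ((M.δ a q G).2 ++ s)

def VPA.Accepts (M : VPA A) (w : List A) : Prop :=
  (M.runAux w M.q0 [M.bot]).1 ∈ M.F ∧ (M.runAux w M.q0 [M.bot]).2 = [M.bot]

/-- The language of well-matched words accepted by a VPA. -/
def VPA.lang (M : VPA A) : Set (WM A) := {w | M.Accepts w.1}

/-- `L` is a visibly pushdown language: it is accepted by a visibly pushdown automaton. -/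
def IsVPL (L : Set (WM A)) : Prop := ∃ M : VPA A, L = M.lang

/-! ### Direct products of Ext-algebras -/

def prodGens {R S : Type*} [Monoid R] [Monoid S] (ER : ExtAlgebra R) (ES : ExtAlgebra S) :
    Set (Function.End (R × S)) :=
  {e | ∃ f ∈ ER.O, ∀ p : R × S, e p = (f p.1, p.2)} ∪
    {e | ∃ g ∈ ES.O, ∀ p : R × S, e p = (p.1, g p.2)}

def prodExt {R S : Type*} [Monoid R] [Monoid S] (ER : ExtAlgebra R) (ES : ExtAlgebra S) :
    ExtAlgebra (R × S) where
  O := Submonoid.closure (prodGens ER ES)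
  mulLeft_mem := by
    intro r
    let f : Function.End (R × S) := fun p => (r.1 * p.1, p.2)
    let g : Function.End (R × S) := fun p => (p.1, r.2 * p.2)
    have h1 : f ∈ Submonoid.closure (prodGens ER ES) :=
      Submonoid.subset_closure
        (Or.inl ⟨fun x => r.1 * x, ER.mulLeft_mem r.1, fun p => rfl⟩)
    have h2 : g ∈ Submonoid.closure (prodGens ER ES) :=
      Submonoid.subset_closure
        (Or.inr ⟨fun x => r.2 * x, ES.mulLeft_mem r.2, fun p => rfl⟩)
    have he : ((fun p => r * p) : Function.End (R × S)) = f * g := by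
      funext p
      rfl
    rw [he]
    exact mul_mem h1 h2
  mulRight_mem := by
    intro r
    let f : Function.End (R × S) := fun p => (p.1 * r.1, p.2)
    let g : Function.End (R × S) := fun p => (p.1, p.2 * r.2)
    have h1 : f ∈ Submonoid.closure (prodGens ER ES) :=
      Submonoid.subset_closure
        (Or.inl ⟨fun x => x * r.1, ER.mulRight_mem r.1, fun p => rfl⟩)
    have h2 : g ∈ Submonoid.closure (prodGens ER ES) :=
      Submonoid.subset_closure
        (Or.inr ⟨fun x => x * r.2, ES.mulRight_mem r.2, fun p => rfl⟩)
    have he : ((fun p => p * r) : Function.End (R × S)) = f * g := by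
      funext p
      rfl
    rw [he]
    exact mul_mem h1 h2

/-! ### Pseudo-varieties -/

/-- A pseudo-variety of visibly pushdown languages. -/
structure LangVariety where
  mem : ∀ (B : Type) [VPAlphabet B] [Finite B], Set (WM B) → Prop
  vpl : ∀ (B : Type) [VPAlphabet B] [Finite B] (L : Set (WM B)), mem B L → IsVPL L
  univ_mem : ∀ (B : Type) [VPAlphabet B] [Finite B], mem B Set.univ
  compl_mem : ∀ (B : Type) [VPAlphabet B] [Finite B] (L : Set (WM B)), mem B L → mem B Lᶜ
  inter_mem : ∀ (B : Type) [VPAlphabet B] [Finite B] (L₁ L₂ : Set (WM B)),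
    mem B L₁ → mem B L₂ → mem B (L₁ ∩ L₂)
  inv_ext : ∀ (B : Type) [VPAlphabet B] [Finite B] (u v : List B)
    (h : WellMatched (u ++ v)) (L : Set (WM B)), mem B L → mem B (extWord u v h ⁻¹' L)
  inv_hom : ∀ (B C : Type) [VPAlphabet B] [Finite B] [VPAlphabet C] [Finite C]
    (φ : ExtHomWM B (freeExt C)) (L : Set (WM C)), mem C L → mem B (φ.toMonoidHom ⁻¹' L)

/-- The trivial `Ext`-algebra. -/
def punitExt : ExtAlgebra PUnit where
  O := ⊤
  mulLeft_mem _ := trivial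
  mulRight_mem _ := trivial

/-- A pseudo-variety of finite `Ext`-algebras. -/
structure AlgVariety where
  mem : BExt → Prop
  punit_mem : mem { carrier := PUnit, ext := punitExt }
  quot_closed : ∀ R S : BExt, mem S → IsQuotientOf R.ext S.ext → mem R
  sub_closed : ∀ (S : BExt) (T : SubExt S.ext),
    mem S → mem { carrier := T.carrier, ext := T.toExtAlgebra }
  prod_closed : ∀ R S : BExt,
    mem R → mem S → mem { carrier := R.carrier × S.carrier, ext := prodExt R.ext S.ext }


/-- `L` is recognised by some member of the pseudo-variety `V` of finite
`Ext`-algebras. -/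
def RecByVar (V : AlgVariety) (B : Type) [VPAlphabet B] (L : Set (WM B)) : Prop :=
  ∃ R : BExt, V.mem R ∧ ∃ φ : ExtHomWM B R.ext, Recognises φ L

/-! ### Auxiliary machinery -/

section Saturation

variable {R : Type*} [Monoid R] {ER : ExtAlgebra R}

theorem recog_sat {φ : ExtHomWM A ER} {L : Set (WM A)} (h : Recognises φ L) {x y : WM A}
    (hxy : φ.toMonoidHom x = φ.toMonoidHom y) (hx : x ∈ L) : y ∈ L := by
  rw [h]; exact ⟨x, hx, hxy⟩

theorem recog_of_sat {φ : ExtHomWM A ER} {L : Set (WM A)}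
    (h : ∀ x y : WM A, φ.toMonoidHom x = φ.toMonoidHom y → x ∈ L → y ∈ L) :
    Recognises φ L := by
  apply Set.eq_of_subset_of_subset
  · intro x hx
    exact ⟨x, hx, rfl⟩
  · rintro x ⟨y, hy, hxy⟩
    exact h y x hxy hy

end Saturation

/-! ### The VPA construction -/

instance finiteOption {α : Type*} [Finite α] : Finite (Option α) :=
  Finite.of_equiv (α ⊕ (PUnit : Type)) (Equiv.optionEquivSumPUnit α).symm

theorem kind_intern {a : A} (h1 : VPAlphabet.kind a ≠ VPKind.call)
    (h2 : VPAlphabet.kind a ≠ VPKind.ret) : VPAlphabet.kind a = VPKind.intern := by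
  cases h : VPAlphabet.kind a <;> simp_all

@[reducible] def toVPA {R : Type} [Monoid R] [Finite R] {ER : ExtAlgebra R} [Finite A]
    (φ : ExtHomWM A ER) (L : Set (WM A)) : VPA A where
  Q := R
  q0 := 1
  Γ := Option (R × A)
  bot := none
  δ a q G :=
    if hc : VPAlphabet.kind a = VPKind.call then (1, [some (q, a), G])
    else if hr : VPAlphabet.kind a = VPKind.ret then
      (match G with
        | none => q
        | some (p, c) =>
          if hcc : VPAlphabet.kind c = VPKind.call then
            p * (φ.op [c] [a] (WellMatched.ext c a [] hcc hr WellMatched.nil) :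
              Function.End R) q
          else q, [])
    else (q * φ.toMonoidHom ⟨[a], WellMatched.intern a (kind_intern hc hr)⟩, [G])
  F := φ.toMonoidHom '' L
  call_spec := fun a q G h => ⟨some (q, a), by simp [h]⟩
  ret_spec := fun a q G h => by simp [h]
  int_spec := fun a q G h => by simp [h]

theorem runAux_append (M : VPA A) (u : List A) :
    ∀ (v : List A) (q : M.Q) (s : List M.Γ),
      M.runAux (u ++ v) q s = M.runAux v (M.runAux u q s).1 (M.runAux u q s).2 := by
  induction u with
  | nil => intro v q s; rfl
  | cons a u ih =>
    intro v q s
    cases s with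
    | nil => simpa [VPA.runAux] using ih v q []
    | cons G s => simpa [VPA.runAux] using ih v _ _

theorem runAux_spec {R : Type} [Monoid R] [Finite R] {ER : ExtAlgebra R} [Finite A]
    (φ : ExtHomWM A ER) (L : Set (WM A)) {w : List A} (hw : WellMatched w) :
    ∀ (q : R) (G : Option (R × A)) (s : List (Option (R × A))),
      (toVPA φ L).runAux w q (G :: s) = (q * φ.toMonoidHom ⟨w, hw⟩, G :: s) := by
  induction hw with
  | nil =>
    intro q G s
    have h1 : (⟨[], WellMatched.nil⟩ : WM A) = (1 : WM A) := rfl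
    show (q, G :: s) = _
    rw [h1, map_one, mul_one]
  | intern c hc =>
    intro q G s
    have h1 : VPAlphabet.kind c ≠ VPKind.call := by simp [hc]
    have h2 : VPAlphabet.kind c ≠ VPKind.ret := by simp [hc]
    show (toVPA φ L).runAux [] ((toVPA φ L).δ c q G).1 (((toVPA φ L).δ c q G).2 ++ s) = _
    simp only [toVPA, dif_neg h1, dif_neg h2]
    rfl
  | ext a b w' ha hb hw' ih =>
    intro q G s
    have hb1 : VPAlphabet.kind b ≠ VPKind.call := by simp [hb]
    have step1 : (toVPA φ L).runAux (a :: w' ++ [b]) q (G :: s)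
        = (toVPA φ L).runAux (w' ++ [b]) 1 (some (q, a) :: G :: s) := by
      show (toVPA φ L).runAux (w' ++ [b]) ((toVPA φ L).δ a q G).1
          (((toVPA φ L).δ a q G).2 ++ s) = _
      simp only [toVPA, dif_pos ha]
      rfl
    rw [step1, runAux_append, ih 1 (some (q, a)) (G :: s)]
    have hab : WellMatched ([a] ++ [b]) := WellMatched.ext a b [] ha hb WellMatched.nil
    have step2 : (toVPA φ L).runAux [b] (1 * φ.toMonoidHom ⟨w', hw'⟩) (some (q, a) :: G :: s)
        = (q * (φ.op [a] [b] hab : Function.End R) (1 * φ.toMonoidHom ⟨w', hw'⟩), G :: s) := by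
      show (toVPA φ L).runAux [] ((toVPA φ L).δ b _ (some (q, a))).1
          (((toVPA φ L).δ b _ (some (q, a))).2 ++ (G :: s)) = _
      simp only [toVPA, dif_neg hb1, dif_pos hb, dif_pos ha]
      rfl
    rw [step2, one_mul]
    exact congrArg (fun r => (q * r, G :: s)) (φ.op_spec [a] [b] hab ⟨w', hw'⟩)
  | append u' v' hu hv ihu ihv =>
    intro q G s
    rw [runAux_append, ihu q G s]
    show (toVPA φ L).runAux v' (q * φ.toMonoidHom ⟨u', hu⟩) (G :: s) = _
    rw [ihv]
    have e3 : φ.toMonoidHom ⟨u' ++ v', WellMatched.append u' v' hu hv⟩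
        = φ.toMonoidHom ⟨u', hu⟩ * φ.toMonoidHom ⟨v', hv⟩ :=
      map_mul φ.toMonoidHom ⟨u', hu⟩ ⟨v', hv⟩
    rw [e3, mul_assoc]

theorem recByVar_isVPL {R : Type} [Monoid R] [Finite R] {ER : ExtAlgebra R} [Finite A]
    (φ : ExtHomWM A ER) (L : Set (WM A)) (hL : Recognises φ L) : IsVPL L := by
  refine ⟨toVPA φ L, ?_⟩
  ext w
  have hrun : (toVPA φ L).runAux w.1 (toVPA φ L).q0 [(toVPA φ L).bot]
      = (1 * φ.toMonoidHom w, [(toVPA φ L).bot]) := runAux_spec φ L w.2 1 none []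
  show w ∈ L ↔ (toVPA φ L).Accepts w.1
  rw [VPA.Accepts, hrun, one_mul]
  constructor
  · intro hw
    exact ⟨⟨w, hw, rfl⟩, rfl⟩
  · rintro ⟨⟨y, hy, hyw⟩, -⟩
    exact recog_sat hL hyw hy

/-! ### The trivial recogniser -/

def punitHom (A : Type) [VPAlphabet A] : ExtHomWM A punitExt where
  toMonoidHom := 1
  op _ _ _ := 1
  op_one := rfl
  op_comp _ _ _ _ _ _ _ := (one_mul 1).symm
  op_spec _ _ _ _ := rfl

/-! ### Products -/

def prodHom {R S : Type} [Monoid R] [Monoid S] {ER : ExtAlgebra R} {ES : ExtAlgebra S}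
    (φ₁ : ExtHomWM A ER) (φ₂ : ExtHomWM A ES) : ExtHomWM A (prodExt ER ES) where
  toMonoidHom := φ₁.toMonoidHom.prod φ₂.toMonoidHom
  op u v h :=
    ⟨fun p => ((φ₁.op u v h : Function.End R) p.1, (φ₂.op u v h : Function.End S) p.2), by
      have h1 : (fun p : R × S => ((φ₁.op u v h : Function.End R) p.1, p.2))
          ∈ Submonoid.closure (prodGens ER ES) :=
        Submonoid.subset_closure (Or.inl ⟨_, (φ₁.op u v h).2, fun p => rfl⟩)
      have h2 : (fun p : R × S => (p.1, (φ₂.op u v h : Function.End S) p.2))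
          ∈ Submonoid.closure (prodGens ER ES) :=
        Submonoid.subset_closure (Or.inr ⟨_, (φ₂.op u v h).2, fun p => rfl⟩)
      exact mul_mem h1 h2⟩
  op_one := by
    apply Subtype.ext
    funext p
    show ((φ₁.op [] [] WellMatched.nil : Function.End R) p.1,
      (φ₂.op [] [] WellMatched.nil : Function.End S) p.2) = p
    rw [φ₁.op_one, φ₂.op_one]
    rfl
  op_comp := by
    intro u v h u' v' h' h''
    apply Subtype.ext
    funext p
    show ((φ₁.op (u ++ u') (v' ++ v) h'' : Function.End R) p.1,
        (φ₂.op (u ++ u') (v' ++ v) h'' : Function.End S) p.2) = _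
    rw [φ₁.op_comp u v h u' v' h' h'', φ₂.op_comp u v h u' v' h' h'']
    rfl
  op_spec := by
    intro u v h x
    exact Prod.ext (φ₁.op_spec u v h x) (φ₂.op_spec u v h x)

/-! ### Inverse morphisms via sub-Ext-algebras -/

theorem freeExt_mem {C : Type} [VPAlphabet C] (e : (freeExt C).O) :
    ∃ (u : List C) (v : List C) (h : WellMatched (u ++ v)), ∀ x, (e : Function.End (WM C)) x = extWord u v h x :=
  e.2

noncomputable def decomp {C : Type} [VPAlphabet C] (e : (freeExt C).O) :
    Σ' (u : List C), Σ' (v : List C), Σ' (h : WellMatched (u ++ v)),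
      ∀ x, (e : Function.End (WM C)) x = extWord u v h x :=
  ⟨(freeExt_mem e).choose, (freeExt_mem e).choose_spec.choose,
    (freeExt_mem e).choose_spec.choose_spec.choose,
    (freeExt_mem e).choose_spec.choose_spec.choose_spec⟩

variable {C : Type} [VPAlphabet C] {R : Type} [Monoid R] {ER : ExtAlgebra R}

def subGens (ψ : ExtHomWM C ER) : Set (Function.End R) :=
  {e | (∃ (u : List C) (v : List C) (h : WellMatched (u ++ v)), e = (ψ.op u v h : Function.End R)) ∨
    (∃ r ∈ MonoidHom.mrange ψ.toMonoidHom, e = fun x => r * x) ∨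
    (∃ r ∈ MonoidHom.mrange ψ.toMonoidHom, e = fun x => x * r)}

theorem mem_subGens {ψ : ExtHomWM C ER} {e : Function.End R} :
    e ∈ subGens ψ ↔
      ((∃ (u : List C) (v : List C) (h : WellMatched (u ++ v)),
          e = (ψ.op u v h : Function.End R)) ∨
        (∃ r ∈ MonoidHom.mrange ψ.toMonoidHom, e = fun x => r * x) ∨
        (∃ r ∈ MonoidHom.mrange ψ.toMonoidHom, e = fun x => x * r)) :=
  Iff.rfl

def subOf (ψ : ExtHomWM C ER) : SubExt ER where
  carrier := MonoidHom.mrange ψ.toMonoidHom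
  ops := Submonoid.closure (subGens ψ)
  ops_le := by
    rw [Submonoid.closure_le]
    intro f hf
    obtain ⟨u, v, h, rfl⟩ | ⟨r, hr, rfl⟩ | ⟨r, hr, rfl⟩ := mem_subGens.mp hf
    · exact (ψ.op u v h).2
    · exact ER.mulLeft_mem r
    · exact ER.mulRight_mem r
  maps_to := by
    intro e he
    refine Submonoid.closure_induction ?_ ?_ ?_ he
    · intro f hf x hx
      obtain ⟨u, v, h, rfl⟩ | ⟨r, ⟨y, rfl⟩, rfl⟩ | ⟨r, ⟨y, rfl⟩, rfl⟩ := mem_subGens.mp hf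
      · obtain ⟨z, rfl⟩ := hx
        exact ⟨extWord u v h z, (ψ.op_spec u v h z).symm⟩
      · obtain ⟨z, rfl⟩ := hx
        exact ⟨y * z, map_mul ψ.toMonoidHom y z⟩
      · obtain ⟨z, rfl⟩ := hx
        exact ⟨z * y, map_mul ψ.toMonoidHom z y⟩
    · intro x hx
      exact hx
    · intro f g hf hg ihf ihg x hx
      exact ihf _ (ihg _ hx)
  mulLeft_mem r hr := Submonoid.subset_closure (mem_subGens.mpr (Or.inr (Or.inl ⟨r, hr, rfl⟩)))
  mulRight_mem r hr := Submonoid.subset_closure (mem_subGens.mpr (Or.inr (Or.inr ⟨r, hr, rfl⟩)))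

theorem decomp_spec_psi (ψ : ExtHomWM C ER) (e : (freeExt C).O) (y : WM C) :
    (ψ.op (decomp e).1 (decomp e).2.1 (decomp e).2.2.1 : Function.End R)
      (ψ.toMonoidHom y) = ψ.toMonoidHom ((e : Function.End (WM C)) y) := by
  rw [ψ.op_spec, ← (decomp e).2.2.2 y]

noncomputable def compHom (φ : ExtHomWM A (freeExt C)) (ψ : ExtHomWM C ER) :
    ExtHomWM A (subOf ψ).toExtAlgebra where
  toMonoidHom := (ψ.toMonoidHom.comp φ.toMonoidHom).codRestrict (subOf ψ).carrier
    (fun x => ⟨φ.toMonoidHom x, rfl⟩)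
  op u v h :=
    ⟨fun x => ⟨(ψ.op (decomp (φ.op u v h)).1 (decomp (φ.op u v h)).2.1
        (decomp (φ.op u v h)).2.2.1 : Function.End R) x.1,
      (subOf ψ).maps_to _ (Submonoid.subset_closure
        (mem_subGens.mpr (Or.inl ⟨(decomp (φ.op u v h)).1, (decomp (φ.op u v h)).2.1,
          (decomp (φ.op u v h)).2.2.1, rfl⟩))) x.1 x.2⟩,
      ⟨(ψ.op (decomp (φ.op u v h)).1 (decomp (φ.op u v h)).2.1
          (decomp (φ.op u v h)).2.2.1 : Function.End R),
        Submonoid.subset_closure (mem_subGens.mpr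
          (Or.inl ⟨(decomp (φ.op u v h)).1, (decomp (φ.op u v h)).2.1,
            (decomp (φ.op u v h)).2.2.1, rfl⟩)), fun x => rfl⟩⟩
  op_one := by
    apply Subtype.ext
    funext x
    apply Subtype.ext
    obtain ⟨y, hy⟩ := x.2
    show (ψ.op (decomp (φ.op [] [] WellMatched.nil)).1 (decomp (φ.op [] [] WellMatched.nil)).2.1
        (decomp (φ.op [] [] WellMatched.nil)).2.2.1 : Function.End R) x.1 = x.1
    rw [← hy, decomp_spec_psi, φ.op_one]
    rfl
  op_comp := by
    intro u v h u' v' h' h''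
    apply Subtype.ext
    funext x
    apply Subtype.ext
    obtain ⟨y, hy⟩ := x.2
    show (ψ.op (decomp (φ.op (u ++ u') (v' ++ v) h'')).1
        (decomp (φ.op (u ++ u') (v' ++ v) h'')).2.1
        (decomp (φ.op (u ++ u') (v' ++ v) h'')).2.2.1 : Function.End R) x.1
      = (ψ.op (decomp (φ.op u v h)).1 (decomp (φ.op u v h)).2.1
          (decomp (φ.op u v h)).2.2.1 : Function.End R)
        ((ψ.op (decomp (φ.op u' v' h')).1 (decomp (φ.op u' v' h')).2.1
          (decomp (φ.op u' v' h')).2.2.1 : Function.End R) x.1)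
    rw [← hy, decomp_spec_psi, decomp_spec_psi, decomp_spec_psi,
      φ.op_comp u v h u' v' h' h'']
    rfl
  op_spec := by
    intro u v h x
    apply Subtype.ext
    show (ψ.op (decomp (φ.op u v h)).1 (decomp (φ.op u v h)).2.1
        (decomp (φ.op u v h)).2.2.1 : Function.End R) (ψ.toMonoidHom (φ.toMonoidHom x))
      = ψ.toMonoidHom (φ.toMonoidHom (extWord u v h x))
    rw [decomp_spec_psi, φ.op_spec]
/-- The languages recognised by a pseudo-variety of finite `Ext`-algebras form a
pseudo-variety of VPL. -/
theorem statement8 (V : AlgVariety) :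
    (∀ (B : Type) [VPAlphabet B] [Finite B] (L : Set (WM B)), RecByVar V B L → IsVPL L) ∧
    (∀ (B : Type) [VPAlphabet B] [Finite B], RecByVar V B (Set.univ : Set (WM B))) ∧
    (∀ (B : Type) [VPAlphabet B] [Finite B] (L : Set (WM B)),
      RecByVar V B L → RecByVar V B Lᶜ) ∧
    (∀ (B : Type) [VPAlphabet B] [Finite B] (L₁ L₂ : Set (WM B)),
      RecByVar V B L₁ → RecByVar V B L₂ → RecByVar V B (L₁ ∩ L₂)) ∧
    (∀ (B : Type) [VPAlphabet B] [Finite B] (u v : List B) (h : WellMatched (u ++ v))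
      (L : Set (WM B)), RecByVar V B L → RecByVar V B (extWord u v h ⁻¹' L)) ∧
    (∀ (B C : Type) [VPAlphabet B] [Finite B] [VPAlphabet C] [Finite C]
      (φ : ExtHomWM B (freeExt C)) (L : Set (WM C)),
      RecByVar V C L → RecByVar V B (φ.toMonoidHom ⁻¹' L)) := by
  refine ⟨?_, ?_, ?_, ?_, ?_, ?_⟩
  · rintro B _ _ L ⟨R, -, φ, hφ⟩
    exact recByVar_isVPL φ L hφ
  · intro B _ _
    exact ⟨{ carrier := PUnit, ext := punitExt }, V.punit_mem, punitHom B,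
      recog_of_sat (fun x y _ _ => trivial)⟩
  · rintro B _ _ L ⟨R, hR, φ, hφ⟩
    exact ⟨R, hR, φ, recog_of_sat (fun x y hxy hx hy => hx (recog_sat hφ hxy.symm hy))⟩
  · rintro B _ _ L₁ L₂ ⟨R₁, h₁, φ₁, hφ₁⟩ ⟨R₂, h₂, φ₂, hφ₂⟩
    refine ⟨{ carrier := R₁.carrier × R₂.carrier, ext := prodExt R₁.ext R₂.ext },
      V.prod_closed R₁ R₂ h₁ h₂, prodHom φ₁ φ₂, recog_of_sat ?_⟩
    intro x y hxy hx
    have e1 : φ₁.toMonoidHom x = φ₁.toMonoidHom y := congrArg Prod.fst hxy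
    have e2 : φ₂.toMonoidHom x = φ₂.toMonoidHom y := congrArg Prod.snd hxy
    exact ⟨recog_sat hφ₁ e1 hx.1, recog_sat hφ₂ e2 hx.2⟩
  · rintro B _ _ u v h L ⟨R, hR, φ, hφ⟩
    refine ⟨R, hR, φ, recog_of_sat ?_⟩
    intro x y hxy hx
    have e1 : φ.toMonoidHom (extWord u v h x) = φ.toMonoidHom (extWord u v h y) := by
      rw [← φ.op_spec, ← φ.op_spec, hxy]
    exact recog_sat hφ e1 hx
  · rintro B C _ _ _ _ φ L ⟨R, hR, ψ, hψ⟩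
    refine ⟨{ carrier := (subOf ψ).carrier, ext := (subOf ψ).toExtAlgebra },
      V.sub_closed R (subOf ψ) hR, compHom φ ψ, recog_of_sat ?_⟩
    intro x y hxy hx
    have e1 : ψ.toMonoidHom (φ.toMonoidHom x) = ψ.toMonoidHom (φ.toMonoidHom y) :=
      congrArg Subtype.val hxy
    exact recog_sat hψ e1 hx
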